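/- arXiv:1211.6355 — 2 statements merged into one kernel-verified Lean document; each statement's English description precedes it below -/
import Mathlib

section
/- Let Z = {P_1,...,P_m} ⊂ P^n be distinct points with dual linear forms L_1,...,L_m ∈ S = K[y_0,...,y_n], K of characteristic zero. Then for every j ≥ 0, the Hilbert function satisfies HF(R/I_Z, j) = dim_K Span_K{L_1^j, ..., L_m^j}. -/
open MvPolynomial

/-- The differential operator on `K[y]` corresponding to the monomial `x^d`. -/
noncomputable def diffMonomial {n : ℕ} (K : Type) [CommRing K] (d : Fin n →₀ ℕ) :
    Module.End K (MvPolynomial (Fin n) K) :=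
  ((List.finRange n).map fun i => (((pderiv i : Derivation K (MvPolynomial (Fin n) K) (MvPolynomial (Fin n) K)).toLinearMap) ^ d i)).prod

/-- The apolarity action `f ∘ G` of `R = K[x]` on `S = K[y]` by partial differentiation. -/
noncomputable def apolar {n : ℕ} {K : Type} [CommRing K]
    (f G : MvPolynomial (Fin n) K) : MvPolynomial (Fin n) K :=
  f.support.sum fun d => f.coeff d • diffMonomial K d G

/-- The dual linear form `L = a_0 y_0 + ⋯ + a_n y_n` of a point with coordinates `a`. -/
noncomputable def dualForm {n : ℕ} {K : Type} [CommRing K] (a : Fin n → K) :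
    MvPolynomial (Fin n) K :=
  ∑ j, C (a j) * X j

/-- Hilbert function of `R/I` in degree `j`. -/
noncomputable def HF {n : ℕ} {K : Type} [Field K]
    (I : Ideal (MvPolynomial (Fin n) K)) (j : ℕ) : ℕ :=
  Module.finrank K ((homogeneousSubmodule (Fin n) K j).map (Ideal.Quotient.mkₐ K I).toLinearMap)

/-- The socle of `R/I`. -/
noncomputable def socle {n : ℕ} {K : Type} [Field K]
    (I : Ideal (MvPolynomial (Fin n) K)) : Submodule K (MvPolynomial (Fin n) K ⧸ I) :=
  ⨅ i : Fin n, LinearMap.ker (LinearMap.mulLeft K (Ideal.Quotient.mk I (X i)))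

/-- `R/I` is Artinian Gorenstein. -/
def ArtinianGorenstein {n : ℕ} {K : Type} [Field K]
    (I : Ideal (MvPolynomial (Fin n) K)) : Prop :=
  FiniteDimensional K (MvPolynomial (Fin n) K ⧸ I) ∧ Module.finrank K (socle I) = 1

lemma EI_nat_coeff_ne_zero {N : ℕ} :
    ∀ (j : ℕ) (d : Fin N →₀ ℕ), d.degree = j →
      coeff d ((∑ k, X k : MvPolynomial (Fin N) ℕ) ^ j) ≠ 0 := by
  intro j
  induction j with
  | zero =>
    intro d hd
    rw [Finsupp.degree_eq_zero_iff] at hd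
    subst hd
    simp
  | succ j ih =>
    intro d hd
    classical
    have hne : d ≠ 0 := by
      intro h; rw [h, map_zero] at hd; omega
    obtain ⟨k₀, hk₀⟩ : ∃ k₀, d k₀ ≠ 0 := by
      by_contra h
      push_neg at h
      exact hne (Finsupp.ext h)
    set d' : Fin N →₀ ℕ := d - Finsupp.single k₀ 1 with hd'
    have hdd : d = Finsupp.single k₀ 1 + d' := by
      ext i
      simp only [Finsupp.add_apply, Finsupp.tsub_apply, Finsupp.single_apply, hd']
      by_cases h : k₀ = i
      · subst h; simp only [ite_true]; omega
      · simp [h]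
    have hdeg' : d'.degree = j := by
      have := congrArg Finsupp.degree hdd
      rw [Finsupp.degree_eq_weight_one] at this hd ⊢
      rw [map_add] at this
      have h1 : (Finsupp.weight fun _ => 1) (Finsupp.single k₀ 1) = 1 := by
        rw [Finsupp.weight_apply, Finsupp.sum_single_index] <;> simp
      omega
    have expand : ((∑ k, X k : MvPolynomial (Fin N) ℕ) ^ (j+1))
        = ∑ k, X k * ((∑ k, X k : MvPolynomial (Fin N) ℕ) ^ j) := by
      rw [pow_succ']
      rw [Finset.sum_mul]
    rw [expand, coeff_sum]
    intro h0
    rw [Finset.sum_eq_zero_iff] at h0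
    have := h0 k₀ (Finset.mem_univ k₀)
    rw [hdd, coeff_X_mul] at this
    exact ih d' hdeg' this

section
variable {N : ℕ} {K : Type} [Field K]


variable {N : ℕ} {K : Type} [Field K]

lemma EI_scale_monomial (a : Fin N → K) (u : Fin N →₀ ℕ) (c : K) :
    aeval (fun k => C (a k) * X k) (monomial u c)
      = monomial u (c * u.prod fun i e => a i ^ e) := by
  rw [aeval_monomial, monomial_eq, algebraMap_eq]
  rw [C_mul, Finsupp.prod, Finsupp.prod, Finsupp.prod,
    Finset.prod_congr rfl (fun i (_ : i ∈ u.support) => mul_pow (C (a i)) (X i) (u i)),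
    Finset.prod_mul_distrib, map_prod]
  ring_nf
  rw [Finset.prod_congr rfl (fun i (_ : i ∈ u.support) => (C_pow (a i) (u i)).symm)]
  ring

lemma EI_coeff_scale (a : Fin N → K) (p : MvPolynomial (Fin N) K) (d : Fin N →₀ ℕ) :
    coeff d (aeval (fun k => C (a k) * X k) p)
      = coeff d p * d.prod fun i e => a i ^ e := by
  classical
  conv_lhs => rw [p.as_sum]
  rw [map_sum, coeff_sum]
  rw [Finset.sum_congr rfl (fun u (_ : u ∈ p.support) => by
    rw [EI_scale_monomial, coeff_monomial])]
  by_cases h : d ∈ p.support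
  · rw [Finset.sum_eq_single d (fun u _ hu => if_neg hu) (fun h' => absurd h h')]
    rw [if_pos rfl]
  · rw [Finset.sum_eq_zero (fun u hu => if_neg (fun (he : u = d) => h (he ▸ hu)))]
    rw [notMem_support_iff.mp h, zero_mul]

lemma EI_dualForm_pow (a : Fin N → K) (j : ℕ) (d : Fin N →₀ ℕ) :
    coeff d (dualForm a ^ j)
      = coeff d ((∑ k, X k : MvPolynomial (Fin N) K) ^ j) * d.prod fun i e => a i ^ e := by
  have : dualForm a = aeval (fun k => C (a k) * X k) (∑ k, X k : MvPolynomial (Fin N) K) := by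
    rw [map_sum]
    exact Finset.sum_congr rfl fun k _ => by rw [aeval_X]
  rw [this, ← map_pow, EI_coeff_scale]

lemma EI_coeff_cast (j : ℕ) (d : Fin N →₀ ℕ) :
    coeff d ((∑ k, X k : MvPolynomial (Fin N) K) ^ j)
      = ((coeff d ((∑ k, X k : MvPolynomial (Fin N) ℕ) ^ j) : ℕ) : K) := by
  have : ((∑ k, X k : MvPolynomial (Fin N) K) ^ j)
      = map (Nat.castRingHom K) ((∑ k, X k : MvPolynomial (Fin N) ℕ) ^ j) := by
    rw [map_pow, map_sum]
    exact congrArg (· ^ j) (Finset.sum_congr rfl fun k _ => (map_X _ k).symm)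
  rw [this, coeff_map]
  rfl



lemma EI_eval_smul {f : MvPolynomial (Fin N) K} {j : ℕ}
    (hf : f.IsHomogeneous j) (t : K) (x : Fin N → K) :
    eval (t • x) f = t ^ j * eval x f := by
  rw [eval_eq, eval_eq, Finset.mul_sum]
  refine Finset.sum_congr rfl fun d hd => ?_
  have hdeg : ∑ i ∈ d.support, d i = j := by
    have := hf (mem_support_iff.mp hd)
    rw [Finsupp.weight_apply] at this
    simpa [Finsupp.sum] using this
  have : (∏ i ∈ d.support, (t • x) i ^ d i)
      = t ^ j * ∏ i ∈ d.support, x i ^ d i := by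
    calc ∏ i ∈ d.support, (t • x) i ^ d i
        = ∏ i ∈ d.support, (t ^ d i * x i ^ d i) := by
          refine Finset.prod_congr rfl fun i _ => ?_
          rw [Pi.smul_apply, smul_eq_mul, mul_pow]
      _ = (∏ i ∈ d.support, t ^ d i) * ∏ i ∈ d.support, x i ^ d i :=
          Finset.prod_mul_distrib
      _ = t ^ j * ∏ i ∈ d.support, x i ^ d i := by
          rw [Finset.prod_pow_eq_pow_sum, hdeg]
  rw [this]; ring

end


/-- Emsalem–Iarrobino: for distinct points with dual forms `L_i`,
`HF(R/I_Z, j) = dim Span{L_1^j, …, L_m^j}`. -/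
theorem emsalem_iarrobino (K : Type) [Field K] [CharZero K] (n m : ℕ)
    (a : Fin m → Fin (n + 1) → K) (ha : ∀ i, a i ≠ 0)
    (hdist : ∀ i j, i ≠ j → ∀ t : K, a i ≠ t • a j)
    (I : Ideal (MvPolynomial (Fin (n + 1)) K))
    (hI : ∀ f, f ∈ I ↔ ∀ i, ∀ t : K, eval (t • a i) f = 0)
    (j : ℕ) :
    HF I j = Module.finrank K
      (Submodule.span K (Set.range fun i => dualForm (a i) ^ j)) := by
  classical
  set R := MvPolynomial (Fin (n + 1)) K
  set V : Submodule K R := homogeneousSubmodule (Fin (n + 1)) K j with hV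
  set W := (Fin m → K)
  -- evaluation map
  set ev : R →ₗ[K] W := LinearMap.pi (fun i => (aeval (a i) : R →ₐ[K] K).toLinearMap) with hev
  have ev_apply : ∀ (f : R) (i : Fin m), ev f i = eval (a i) f := by
    intro f i
    show (aeval (a i)) f = eval (a i) f
    rw [aeval_def, Algebra.algebraMap_self]
    rfl
  set M₁ : V →ₗ[K] (R ⧸ I) := (Ideal.Quotient.mkₐ K I).toLinearMap ∘ₗ V.subtype with hM₁
  set M₂ : V →ₗ[K] W := ev ∘ₗ V.subtype with hM₂
  -- kernels agree
  have hker : LinearMap.ker M₁ = LinearMap.ker M₂ := by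
    ext f
    simp only [LinearMap.mem_ker, hM₁, hM₂, LinearMap.comp_apply, Submodule.subtype_apply]
    rw [show (Ideal.Quotient.mkₐ K I).toLinearMap f.1 = Ideal.Quotient.mk I f.1 from rfl,
      Ideal.Quotient.eq_zero_iff_mem, hI]
    constructor
    · intro h
      funext i
      rw [ev_apply]
      have := h i 1
      rwa [one_smul] at this
    · intro h i t
      have hf : (f : R).IsHomogeneous j := f.2
      rw [EI_eval_smul hf]
      have : eval (a i) (f : R) = 0 := by rw [← ev_apply, h]; rfl
      rw [this, mul_zero]
  -- step 1 : HF = finrank (range M₂)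
  have step1 : HF I j = Module.finrank K (LinearMap.range M₂) := by
    have h1 : V.map (Ideal.Quotient.mkₐ K I).toLinearMap = LinearMap.range M₁ := by
      rw [hM₁, LinearMap.range_comp, Submodule.range_subtype]
    rw [HF, h1]
    have e1 := (LinearMap.quotKerEquivRange M₁).symm
    have e2 := LinearMap.quotKerEquivRange M₂
    rw [hker] at e1
    exact LinearEquiv.finrank_eq (e1.trans e2)
  -- step 2 : transpose / duality argument
  set L : Fin m → R := fun i => dualForm (a i) ^ j with hLdef
  set ψ : (W →ₗ[K] R) := Fintype.linearCombination K L with hψ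
  have hspan : Submodule.span K (Set.range L) = LinearMap.range ψ :=
    (Fintype.range_linearCombination _ _).symm
  set b := Pi.basisFun K (Fin m) with hb
  set e : W ≃ₗ[K] Module.Dual K W := b.toDualEquiv with he
  have he_apply : ∀ c w : W, e c w = ∑ i, w i * c i := by
    intro c w
    conv_lhs => rw [← Module.Basis.sum_repr b w]
    rw [map_sum]
    refine Finset.sum_congr rfl fun i _ => ?_
    rw [map_smul]
    have h1 : e c (b i) = c i := by
      rw [he, Module.Basis.toDualEquiv_apply, Module.Basis.toDual_eq_repr, Pi.basisFun_repr]
    rw [h1, Pi.basisFun_repr, smul_eq_mul]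
  -- the quantity S_d
  have key : LinearMap.ker ψ
      = Submodule.comap e.toLinearMap
          (Submodule.dualAnnihilator (LinearMap.range M₂)) := by
    ext c
    rw [LinearMap.mem_ker, Submodule.mem_comap, Submodule.mem_dualAnnihilator]
    have hA : (∀ w ∈ LinearMap.range M₂, e.toLinearMap c w = 0)
        ↔ ∀ f : V, ∑ i, eval (a i) (f : R) * c i = 0 := by
      constructor
      · intro h f
        have := h (M₂ f) (LinearMap.mem_range_self _ f)
        rw [LinearEquiv.coe_coe, he_apply] at this
        rw [← this]
        refine Finset.sum_congr rfl fun i _ => ?_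
        rw [hM₂, LinearMap.comp_apply, Submodule.subtype_apply, ev_apply]
      · rintro h w ⟨f, rfl⟩
        rw [LinearEquiv.coe_coe, he_apply]
        rw [← h f]
        refine Finset.sum_congr rfl fun i _ => ?_
        rw [hM₂, LinearMap.comp_apply, Submodule.subtype_apply, ev_apply]
    rw [hA]
    have hcoeffL : ∀ (d : Fin (n+1) →₀ ℕ) (i : Fin m),
        coeff d (L i) = coeff d ((∑ k, X k : MvPolynomial (Fin (n+1)) K) ^ j)
          * d.prod fun k e => a i k ^ e := fun d i => EI_dualForm_pow (a i) j d
    have hNzero : ∀ d : Fin (n+1) →₀ ℕ, d.degree = j →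
        coeff d ((∑ k, X k : MvPolynomial (Fin (n+1)) K) ^ j) ≠ 0 := by
      intro d hd
      rw [EI_coeff_cast]
      exact_mod_cast Nat.cast_ne_zero.mpr (EI_nat_coeff_ne_zero j d hd)
    have hNhom : ∀ d : Fin (n+1) →₀ ℕ, d.degree ≠ j →
        coeff d ((∑ k, X k : MvPolynomial (Fin (n+1)) K) ^ j) = 0 := by
      intro d hd
      by_contra hcd
      have hhom : ((∑ k, X k : MvPolynomial (Fin (n+1)) K) ^ j).IsHomogeneous j := by
        have h1 : (∑ k, X k : MvPolynomial (Fin (n+1)) K).IsHomogeneous 1 :=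
          IsHomogeneous.sum _ _ _ fun k _ => isHomogeneous_X _ _
        simpa using h1.pow j
      apply hd
      rw [Finsupp.degree_eq_weight_one]
      exact hhom hcd
    constructor
    · intro hc f
      -- first : for each d of degree j, S_d c = 0
      have hSd : ∀ d : Fin (n+1) →₀ ℕ, d.degree = j →
          ∑ i, c i * d.prod (fun k e => a i k ^ e) = 0 := by
        intro d hd
        have h0 : coeff d (ψ c) = 0 := by rw [hc]; exact coeff_zero d
        rw [hψ, Fintype.linearCombination_apply, coeff_sum] at h0
        have h1 : ∑ i, c i * coeff d (L i)
            = coeff d ((∑ k, X k : MvPolynomial (Fin (n+1)) K) ^ j)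
              * ∑ i, c i * d.prod (fun k e => a i k ^ e) := by
          rw [Finset.mul_sum]
          refine Finset.sum_congr rfl fun i _ => ?_
          rw [hcoeffL]; ring
        have h2 : ∑ i, c i * coeff d (L i) = 0 := by
          rw [← h0]
          exact Finset.sum_congr rfl fun i _ => (coeff_smul d (c i) (L i)).symm ▸ rfl
        rw [h1] at h2
        exact (mul_eq_zero.mp h2).resolve_left (hNzero d hd)
      -- now expand eval via monomials
      have hf : (f : R).IsHomogeneous j := f.2
      calc ∑ i, eval (a i) (f : R) * c i
          = ∑ i, ∑ d ∈ (f : R).support,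
              coeff d (f : R) * (d.prod fun k e => a i k ^ e) * c i := by
            refine Finset.sum_congr rfl fun i _ => ?_
            rw [eval_eq, Finset.sum_mul]
            rfl
        _ = ∑ d ∈ (f : R).support,
              coeff d (f : R) * ∑ i, c i * d.prod (fun k e => a i k ^ e) := by
            rw [Finset.sum_comm]
            refine Finset.sum_congr rfl fun d _ => ?_
            rw [Finset.mul_sum]
            refine Finset.sum_congr rfl fun i _ => by ring
        _ = 0 := by
            refine Finset.sum_eq_zero fun d hd => ?_
            have hdeg : d.degree = j := by
              rw [Finsupp.degree_eq_weight_one]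
              exact hf (mem_support_iff.mp hd)
            rw [hSd d hdeg, mul_zero]
    · intro hc
      -- show ψ c = 0 coefficientwise
      have hSd : ∀ d : Fin (n+1) →₀ ℕ, d.degree = j →
          ∑ i, c i * d.prod (fun k e => a i k ^ e) = 0 := by
        intro d hd
        have hmon : (monomial d (1 : K)) ∈ V := by
          rw [hV, mem_homogeneousSubmodule]
          exact isHomogeneous_monomial _ hd
        have := hc ⟨monomial d 1, hmon⟩
        rw [← this]
        refine Finset.sum_congr rfl fun i _ => ?_
        rw [eval_monomial, one_mul]
        ring
      rw [hψ]
      apply MvPolynomial.ext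
      intro d
      rw [Fintype.linearCombination_apply, coeff_sum, coeff_zero]
      have h1 : ∑ i, coeff d (c i • L i)
          = coeff d ((∑ k, X k : MvPolynomial (Fin (n+1)) K) ^ j)
            * ∑ i, c i * d.prod (fun k e => a i k ^ e) := by
        rw [Finset.mul_sum]
        refine Finset.sum_congr rfl fun i _ => ?_
        rw [coeff_smul, hcoeffL, smul_eq_mul]; ring
      rw [h1]
      by_cases hd : d.degree = j
      · rw [hSd d hd, mul_zero]
      · rw [hNhom d hd, zero_mul]
  -- finrank chase
  have hWfin : Module.finrank K W = m := by
    rw [Module.finrank_pi]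
    exact Fintype.card_fin m
  have hq : Module.finrank K (W ⧸ (LinearMap.range M₂))
      + Module.finrank K (LinearMap.range M₂) = m := by
    rw [Submodule.finrank_quotient_add_finrank, hWfin]
  have hann : Module.finrank K
      ((LinearMap.range M₂).dualAnnihilator)
      = Module.finrank K (W ⧸ (LinearMap.range M₂)) :=
    (LinearEquiv.finrank_eq (Subspace.quotEquivAnnihilator _)).symm
  have hcomap : Module.finrank K (LinearMap.ker ψ)
      = Module.finrank K ((LinearMap.range M₂).dualAnnihilator) := by
    rw [key]
    exact LinearEquiv.finrank_eq (LinearEquiv.ofSubmodule' _ _)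
  have hrn : Module.finrank K (LinearMap.range ψ)
      + Module.finrank K (LinearMap.ker ψ) = m := by
    rw [LinearMap.finrank_range_add_finrank_ker, hWfin]
  rw [step1]
  have hgoal : (Submodule.span K (Set.range fun i => dualForm (a i) ^ j))
      = LinearMap.range ψ := hspan
  rw [hgoal]
  have h1 : Module.finrank K (LinearMap.ker ψ)
      = Module.finrank K (W ⧸ (LinearMap.range M₂)) := hcomap.trans hann
  rw [← h1] at hq
  have h2 : Module.finrank K (LinearMap.range M₂)
      = Module.finrank K (LinearMap.range ψ) := by omega
  exact h2
end

section
/- Let Z = {P_1,...,P_m} ⊂ P^n be distinct points with r = reg(R/I_Z) the Castelnuovo–Mumford regularity, and L_1,...,L_m the dual linear forms. Then the powers L_1^r, ..., L_m^r are linearly independent over K, i.e., dim_K Span_K{L_1^r,...,L_m^r} = m. -/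
open MvPolynomial

section Aux

variable {n : ℕ} {K : Type}

lemma aux_sum_univ (d : Fin n →₀ ℕ) : ∑ j, d j = Finsupp.degree d := by
  rw [Finsupp.degree]
  exact (Finset.sum_subset (Finset.subset_univ _) (fun x _ hx => by
    simpa using Finsupp.notMem_support_iff.mp hx)).symm

lemma aux_deg [CommSemiring K] {f : MvPolynomial (Fin n) K} {r : ℕ}
    (hf : f.IsHomogeneous r) {d : Fin n →₀ ℕ} (hd : coeff d f ≠ 0) :
    ∑ j, d j = r := by
  rw [aux_sum_univ, Finsupp.degree_eq_weight_one]
  exact hf hd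

lemma aux_prod_monomial [CommSemiring K] {ι : Type} (s : Finset ι)
    (g : ι → (Fin n →₀ ℕ)) (c : ι → K) :
    ∏ j ∈ s, monomial (g j) (c j) = monomial (∑ j ∈ s, g j) (∏ j ∈ s, c j) := by
  induction s using Finset.cons_induction with
  | empty => simp
  | cons i s hi ih =>
      rw [Finset.prod_cons, ih, Finset.sum_cons, Finset.prod_cons, monomial_mul]

lemma aux_single_sum_apply {n : ℕ} (k : Fin n → ℕ) (i : Fin n) :
    (∑ j, Finsupp.single j (k j)) i = k i := by
  rw [Finset.sum_apply']
  rw [Finset.sum_eq_single i (fun b _ hb => Finsupp.single_eq_of_ne' hb)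
    (fun h => absurd (Finset.mem_univ i) h)]
  exact Finsupp.single_eq_same

lemma aux_eval_smul [CommSemiring K] {f : MvPolynomial (Fin n) K} {r : ℕ}
    (hf : f.IsHomogeneous r) (t : K) (x : Fin n → K) :
    eval (t • x) f = t ^ r * eval x f := by
  rw [eval_eq', eval_eq', Finset.mul_sum]
  refine Finset.sum_congr rfl fun d hd => ?_
  have h := aux_deg hf (mem_support_iff.mp hd)
  rw [← h]
  simp only [Pi.smul_apply, smul_eq_mul, mul_pow]
  rw [Finset.prod_mul_distrib, Finset.prod_pow_eq_pow_sum]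
  ring

lemma aux_coeff_pow [Field K] [CharZero K] (a : Fin n → K) (r : ℕ)
    (d : Fin n →₀ ℕ) (hd : ∑ j, d j = r) :
    coeff d (dualForm a ^ r) = (Nat.multinomial Finset.univ ⇑d : K) * ∏ j, a j ^ d j := by
  have hprod : ∀ k : Fin n → ℕ,
      (∏ j, (C (a j) * X j) ^ k j)
        = monomial (∑ j, Finsupp.single j (k j)) (∏ j, a j ^ k j) := by
    intro k
    rw [← aux_prod_monomial]
    refine Finset.prod_congr rfl fun j _ => ?_
    rw [mul_pow, ← C_pow, X_pow_eq_monomial, C_mul_monomial, mul_one]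
  have hmem : ⇑d ∈ Finset.piAntidiag Finset.univ r := by
    rw [Finset.mem_piAntidiag]; exact ⟨hd, fun i _ => Finset.mem_univ i⟩
  rw [dualForm, Finset.sum_pow_eq_sum_piAntidiag, coeff_sum]
  rw [Finset.sum_eq_single_of_mem (⇑d) hmem]
  · rw [hprod, ← C_eq_coe_nat, coeff_C_mul, coeff_monomial, if_pos]
    exact Finsupp.ext (aux_single_sum_apply _)
  · intro k _ hk
    rw [hprod, ← C_eq_coe_nat, coeff_C_mul, coeff_monomial, if_neg, mul_zero]
    intro h
    exact hk (funext fun i => by rw [← aux_single_sum_apply k i, h])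

/-- Evaluation at a point as a linear map. -/
noncomputable def auxEval [CommSemiring K] (x : Fin n → K) :
    MvPolynomial (Fin n) K →ₗ[K] K where
  toFun := eval x
  map_add' f g := by simp
  map_smul' c f := by simp [smul_eq_C_mul]

@[simp] lemma auxEval_apply [CommSemiring K] (x : Fin n → K) (f : MvPolynomial (Fin n) K) :
    auxEval x f = eval x f := rfl

/-- The apolarity pairing functional attached to `f`. -/
noncomputable def auxPhi [Field K] (f : MvPolynomial (Fin n) K) :
    MvPolynomial (Fin n) K →ₗ[K] K :=
  ∑ d ∈ f.support, (coeff d f * ((Nat.multinomial Finset.univ ⇑d : K))⁻¹) • lcoeff K d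

lemma auxPhi_dualForm [Field K] [CharZero K] {f : MvPolynomial (Fin n) K} {r : ℕ}
    (hf : f.IsHomogeneous r) (b : Fin n → K) :
    auxPhi f (dualForm b ^ r) = eval b f := by
  rw [eval_eq']
  rw [auxPhi, LinearMap.sum_apply]
  refine Finset.sum_congr rfl fun d hd => ?_
  rw [LinearMap.smul_apply, lcoeff_apply,
    aux_coeff_pow b r d (aux_deg hf (mem_support_iff.mp hd))]
  have hm : (Nat.multinomial Finset.univ ⇑d : K) ≠ 0 :=
    Nat.cast_ne_zero.mpr (Nat.multinomial_pos _ _).ne'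
  rw [smul_eq_mul]
  field_simp

lemma aux_main (K : Type) [Field K] [CharZero K] (n m : ℕ)
    (a : Fin m → Fin (n + 1) → K)
    (I : Ideal (MvPolynomial (Fin (n + 1)) K))
    (hI : ∀ f, f ∈ I ↔ ∀ i, ∀ t : K, eval (t • a i) f = 0)
    (r : ℕ)
    (hr : Module.finrank K ((homogeneousSubmodule (Fin (n+1)) K r).map
      (Ideal.Quotient.mkₐ K I).toLinearMap) = m) :
    LinearIndependent K (fun i => dualForm (a i) ^ r) := by
  classical
  set p := homogeneousSubmodule (Fin (n + 1)) K r with hp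
  set q : p →ₗ[K] (MvPolynomial (Fin (n + 1)) K ⧸ I) :=
    (Ideal.Quotient.mkₐ K I).toLinearMap ∘ₗ p.subtype with hq
  set g : p →ₗ[K] (Fin m → K) :=
    LinearMap.pi (fun i => auxEval (a i) ∘ₗ p.subtype) with hgdef
  have hker : LinearMap.ker g = LinearMap.ker q := by
    ext f
    have hfh : (f : MvPolynomial (Fin (n + 1)) K).IsHomogeneous r :=
      (mem_homogeneousSubmodule _ _).mp f.2
    simp only [LinearMap.mem_ker, hq, hgdef, LinearMap.comp_apply, AlgHom.toLinearMap_apply,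
      Ideal.Quotient.mkₐ_eq_mk, Ideal.Quotient.eq_zero_iff_mem, Submodule.coe_subtype]
    constructor
    · intro h
      rw [hI]
      intro i t
      have h0 : eval (a i) (f : MvPolynomial (Fin (n + 1)) K) = 0 := by
        have := congrFun h i
        simpa [LinearMap.pi_apply] using this
      rw [aux_eval_smul hfh, h0, mul_zero]
    · intro h
      funext i
      have := (hI _).mp h i 1
      simpa [LinearMap.pi_apply, one_smul] using this
  have hrangeq : LinearMap.range q
      = (homogeneousSubmodule (Fin (n+1)) K r).map (Ideal.Quotient.mkₐ K I).toLinearMap := by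
    rw [hq, LinearMap.range_comp, Submodule.range_subtype]
  have hfr : Module.finrank K (LinearMap.range g) = m := by
    have e1 : Module.finrank K (LinearMap.range g)
        = Module.finrank K (LinearMap.range q) := by
      rw [← LinearEquiv.finrank_eq g.quotKerEquivRange,
        ← LinearEquiv.finrank_eq q.quotKerEquivRange, hker]
    rw [e1, hrangeq, hr]
  have htop : LinearMap.range g = ⊤ := by
    apply Submodule.eq_top_of_finrank_eq
    rw [hfr, Module.finrank_fin_fun]
  rw [Fintype.linearIndependent_iff]
  intro c hc k
  obtain ⟨f, hf⟩ := LinearMap.range_eq_top.mp htop (Pi.single k 1)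
  have hfh : (f : MvPolynomial (Fin (n + 1)) K).IsHomogeneous r :=
    (mem_homogeneousSubmodule _ _).mp f.2
  have heval : ∀ i, eval (a i) (f : MvPolynomial (Fin (n + 1)) K)
      = (Pi.single k 1 : Fin m → K) i := by
    intro i
    have := congrFun hf i
    simpa [hgdef, LinearMap.pi_apply] using this
  have h0 := congrArg (auxPhi (f : MvPolynomial (Fin (n + 1)) K)) hc
  rw [map_sum, map_zero] at h0
  simp only [map_smul, auxPhi_dualForm hfh, heval, smul_eq_mul] at h0
  rw [Finset.sum_eq_single k (fun b _ hb => by rw [Pi.single_eq_of_ne hb, mul_zero])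
    (fun h => absurd (Finset.mem_univ k) h), Pi.single_eq_same, mul_one] at h0
  exact h0

end Aux

/-- for distinct points with `r = reg(R/I_Z)` (the least degree where the
Hilbert function reaches `m`), the powers `L_1^r, …, L_m^r` are linearly independent, i.e.
their span has dimension `m`. -/
theorem powers_at_regularity_linearIndependent (K : Type) [Field K] [CharZero K] (n m : ℕ)
    (a : Fin m → Fin (n + 1) → K) (ha : ∀ i, a i ≠ 0)
    (hdist : ∀ i j, i ≠ j → ∀ t : K, a i ≠ t • a j)
    (I : Ideal (MvPolynomial (Fin (n + 1)) K))
    (hI : ∀ f, f ∈ I ↔ ∀ i, ∀ t : K, eval (t • a i) f = 0)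
    (r : ℕ) (hreg : IsLeast {j : ℕ | HF I j = m} r) :
    LinearIndependent K (fun i => dualForm (a i) ^ r) ∧
      Module.finrank K (Submodule.span K (Set.range fun i => dualForm (a i) ^ r)) = m := by
  have hr : Module.finrank K ((homogeneousSubmodule (Fin (n+1)) K r).map
      (Ideal.Quotient.mkₐ K I).toLinearMap) = m := hreg.1
  have hLI := aux_main K n m a I hI r hr
  exact ⟨hLI, by rw [finrank_span_eq_card hLI, Fintype.card_fin]⟩
end
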